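/- Let w = (w1, w2) ∈ ℕ₊² and let F = (F1, F2) be a polynomial automorphism of ℂ² of length at least 2, i.e. F = L2 ∘ T_l ∘ ⋯ ∘ T_1 ∘ L1 with l ≥ 2, where L1, L2 are affine automorphisms and the T_i are alternately of the forms (x,y) ↦ (x, y + f_i(x)) and (x,y) ↦ (x + f_i(y), y) with deg f_i > 1. Then (deg_w F1, deg_w F2) belongs to {(d1,d2) ∈ (w1ℕ₊)² : min{d1,d2} ≥ max{w1,w2} and (d1 | d2 or d2 | d1)} ∪ {(d1,d2) ∈ (w2ℕ₊)² : min{d1,d2} ≥ max{w1,w2} and (d1 | d2 or d2 | d1)}. -/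
import Mathlib


open MvPolynomial

/-- A polynomial map of ℂ², given by its two component polynomials. -/
abbrev PolyMap : Type := MvPolynomial (Fin 2) ℂ × MvPolynomial (Fin 2) ℂ

/-- Composition of polynomial maps: (F ∘ G). -/
noncomputable def pcomp (F G : PolyMap) : PolyMap :=
  (MvPolynomial.aeval ![G.1, G.2] F.1, MvPolynomial.aeval ![G.1, G.2] F.2)

/-- `F` is a polynomial automorphism of ℂ²: it has a polynomial inverse. -/
def IsPolyAut (F : PolyMap) : Prop :=
  ∃ G : PolyMap, pcomp F G = (MvPolynomial.X 0, MvPolynomial.X 1) ∧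
    pcomp G F = (MvPolynomial.X 0, MvPolynomial.X 1)

/-- Weighted degree with `wdeg x = w1`, `wdeg y = w2` (0 on the zero polynomial). -/
noncomputable def wdeg (w1 w2 : ℕ) (p : MvPolynomial (Fin 2) ℂ) : ℕ :=
  p.support.sup fun α => α 0 * w1 + α 1 * w2

/-- An affine automorphism: an automorphism both of whose components have total degree 1. -/
def IsAffineAut (F : PolyMap) : Prop :=
  IsPolyAut F ∧ F.1.totalDegree = 1 ∧ F.2.totalDegree = 1

/-- The triangular map (x, y) ↦ (x, y + f(x)). -/
noncomputable def lowerT (f : Polynomial ℂ) : PolyMap :=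
  (MvPolynomial.X 0,
   MvPolynomial.X 1 + Polynomial.aeval (MvPolynomial.X 0 : MvPolynomial (Fin 2) ℂ) f)

/-- The triangular map (x, y) ↦ (x + f(y), y). -/
noncomputable def upperT (f : Polynomial ℂ) : PolyMap :=
  (MvPolynomial.X 0 + Polynomial.aeval (MvPolynomial.X 1 : MvPolynomial (Fin 2) ℂ) f,
   MvPolynomial.X 1)

/-- `chain L1 f l = T_l ∘ ⋯ ∘ T_1 ∘ L1`, where `T_i = lowerT (f i)` for odd `i`
and `T_i = upperT (f i)` for even `i`. -/
noncomputable def chain (L1 : PolyMap) (f : ℕ → Polynomial ℂ) : ℕ → PolyMap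
  | 0 => L1
  | i + 1 => pcomp (if i % 2 = 0 then lowerT (f (i + 1)) else upperT (f (i + 1))) (chain L1 f i)


section Aux
open MvPolynomial Polynomial

abbrev P2 : Type := MvPolynomial (Fin 2) ℂ

/-- weight of a monomial -/
def wt (w1 w2 : ℕ) (α : Fin 2 →₀ ℕ) : ℕ := α 0 * w1 + α 1 * w2

lemma wt_add (w1 w2 : ℕ) (α β : Fin 2 →₀ ℕ) : wt w1 w2 (α + β) = wt w1 w2 α + wt w1 w2 β := by
  simp [wt]; ring

lemma wdeg_eq_sup (w1 w2 : ℕ) (p : P2) : wdeg w1 w2 p = p.support.sup (wt w1 w2) := rfl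

lemma le_wdeg {w1 w2 : ℕ} {p : P2} {α : Fin 2 →₀ ℕ} (h : α ∈ p.support) :
    wt w1 w2 α ≤ wdeg w1 w2 p := Finset.le_sup h

lemma wdeg_zero (w1 w2 : ℕ) : wdeg w1 w2 (0 : P2) = 0 := by
  simp [wdeg]

lemma wdeg_le_iff {w1 w2 d : ℕ} {p : P2} :
    wdeg w1 w2 p ≤ d ↔ ∀ α ∈ p.support, wt w1 w2 α ≤ d := Finset.sup_le_iff

lemma exists_wt_eq {w1 w2 : ℕ} {p : P2} (hp : p ≠ 0) :
    ∃ α ∈ p.support, wt w1 w2 α = wdeg w1 w2 p := by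
  obtain ⟨α, hα, hs⟩ := Finset.exists_mem_eq_sup p.support
    (MvPolynomial.support_nonempty.mpr hp) (wt w1 w2)
  exact ⟨α, hα, hs.symm⟩

lemma wdeg_C (w1 w2 : ℕ) (c : ℂ) : wdeg w1 w2 (MvPolynomial.C c : P2) = 0 := by
  classical
  rcases eq_or_ne c 0 with rfl | hc
  · simp [wdeg]
  · rw [wdeg_eq_sup, MvPolynomial.C_apply, MvPolynomial.support_monomial]
    simp [hc, wt]

lemma wdeg_add_le (w1 w2 : ℕ) (p q : P2) :
    wdeg w1 w2 (p + q) ≤ max (wdeg w1 w2 p) (wdeg w1 w2 q) := by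
  rw [wdeg_le_iff]
  intro α hα
  rcases Finset.mem_union.mp (MvPolynomial.support_add hα) with h | h
  · exact le_trans (le_wdeg h) (le_max_left _ _)
  · exact le_trans (le_wdeg h) (le_max_right _ _)

lemma wdeg_mul_le (w1 w2 : ℕ) (p q : P2) :
    wdeg w1 w2 (p * q) ≤ wdeg w1 w2 p + wdeg w1 w2 q := by
  classical
  rw [wdeg_le_iff]
  intro α hα
  obtain ⟨β, hβ, γ, hγ, rfl⟩ := Finset.mem_add.mp (MvPolynomial.support_mul p q hα)
  rw [wt_add]
  exact Nat.add_le_add (le_wdeg hβ) (le_wdeg hγ)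

lemma wdeg_add_left {w1 w2 : ℕ} {p q : P2} (h : wdeg w1 w2 q < wdeg w1 w2 p) :
    wdeg w1 w2 (p + q) = wdeg w1 w2 p := by
  have hp : p ≠ 0 := by rintro rfl; simp [wdeg_zero] at h
  obtain ⟨α, hα, hwt⟩ := exists_wt_eq (w1 := w1) (w2 := w2) hp
  have hqα : MvPolynomial.coeff α q = 0 := by
    by_contra hc
    have := le_wdeg (w1 := w1) (w2 := w2) (MvPolynomial.mem_support_iff.mpr hc)
    omega
  have hmem : α ∈ (p + q).support := by
    rw [MvPolynomial.mem_support_iff, MvPolynomial.coeff_add, hqα, add_zero]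
    exact MvPolynomial.mem_support_iff.mp hα
  refine le_antisymm (le_trans (wdeg_add_le w1 w2 p q) (by omega)) ?_
  calc wdeg w1 w2 p = wt w1 w2 α := hwt.symm
  _ ≤ _ := le_wdeg hmem
lemma fin2_finsupp_ext {α β : Fin 2 →₀ ℕ} (h0 : α 0 = β 0) (h1 : α 1 = β 1) : α = β := by
  ext i
  fin_cases i <;> assumption

lemma wdeg_mul {w1 w2 : ℕ} (hw1 : 0 < w1) (hw2 : 0 < w2) {p q : P2}
    (hp : p ≠ 0) (hq : q ≠ 0) :
    wdeg w1 w2 (p * q) = wdeg w1 w2 p + wdeg w1 w2 q := by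
  classical
  refine le_antisymm (wdeg_mul_le w1 w2 p q) ?_
  -- pick leading monomials maximizing (wt, ·0) lexicographically
  set A := p.support.filter (fun α => wt w1 w2 α = wdeg w1 w2 p) with hA
  set B := q.support.filter (fun α => wt w1 w2 α = wdeg w1 w2 q) with hB
  have hAne : A.Nonempty := by
    obtain ⟨α, hα, hwt⟩ := exists_wt_eq (w1 := w1) (w2 := w2) hp
    exact ⟨α, Finset.mem_filter.mpr ⟨hα, hwt⟩⟩
  have hBne : B.Nonempty := by
    obtain ⟨α, hα, hwt⟩ := exists_wt_eq (w1 := w1) (w2 := w2) hq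
    exact ⟨α, Finset.mem_filter.mpr ⟨hα, hwt⟩⟩
  obtain ⟨a, ha, hamax⟩ := A.exists_max_image (fun α => α 0) hAne
  obtain ⟨b, hb, hbmax⟩ := B.exists_max_image (fun α => α 0) hBne
  obtain ⟨hap, hawt⟩ := Finset.mem_filter.mp ha
  obtain ⟨hbp, hbwt⟩ := Finset.mem_filter.mp hb
  -- the coefficient of a + b in p*q is coeff p a * coeff q b
  have key : MvPolynomial.coeff (a + b) (p * q) =
      MvPolynomial.coeff a p * MvPolynomial.coeff b q := by
    rw [MvPolynomial.coeff_mul]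
    refine Finset.sum_eq_single_of_mem (a, b) (Finset.HasAntidiagonal.mem_antidiagonal.mpr rfl) ?_
    rintro ⟨β, γ⟩ hmem hne
    have hsum : β + γ = a + b := Finset.HasAntidiagonal.mem_antidiagonal.mp hmem
    by_contra hc
    have hβ : β ∈ p.support := by
      rw [MvPolynomial.mem_support_iff]; intro h; rw [h] at hc; simp at hc
    have hγ : γ ∈ q.support := by
      rw [MvPolynomial.mem_support_iff]; intro h; rw [h] at hc; simp at hc
    have h1 : wt w1 w2 β ≤ wdeg w1 w2 p := le_wdeg hβ
    have h2 : wt w1 w2 γ ≤ wdeg w1 w2 q := le_wdeg hγ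
    have h3 : wt w1 w2 β + wt w1 w2 γ = wdeg w1 w2 p + wdeg w1 w2 q := by
      rw [← wt_add, hsum, wt_add, hawt, hbwt]
    have hβwt : wt w1 w2 β = wdeg w1 w2 p := by omega
    have hγwt : wt w1 w2 γ = wdeg w1 w2 q := by omega
    have hβA : β ∈ A := Finset.mem_filter.mpr ⟨hβ, hβwt⟩
    have hγB : γ ∈ B := Finset.mem_filter.mpr ⟨hγ, hγwt⟩
    have hβ0 : β 0 ≤ a 0 := hamax β hβA
    have hγ0 : γ 0 ≤ b 0 := hbmax γ hγB
    have hsum0 : β 0 + γ 0 = a 0 + b 0 := by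
      have := congrArg (fun f : Fin 2 →₀ ℕ => f 0) hsum
      simpa using this
    have hβ0' : β 0 = a 0 := by omega
    have hγ0' : γ 0 = b 0 := by omega
    have hβ1 : β 1 = a 1 := by
      have : β 0 * w1 + β 1 * w2 = a 0 * w1 + a 1 * w2 := by
        rw [← hawt] at hβwt; exact hβwt
      rw [hβ0'] at this
      have : β 1 * w2 = a 1 * w2 := by omega
      exact Nat.eq_of_mul_eq_mul_right hw2 this
    have hγ1 : γ 1 = b 1 := by
      have hsum1 : β 1 + γ 1 = a 1 + b 1 := by
        have := congrArg (fun f : Fin 2 →₀ ℕ => f 1) hsum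
        simpa using this
      omega
    exact hne (by rw [Prod.mk.injEq]; exact ⟨fin2_finsupp_ext hβ0' hβ1, fin2_finsupp_ext hγ0' hγ1⟩)
  have hcoeff : MvPolynomial.coeff (a + b) (p * q) ≠ 0 := by
    rw [key]
    exact mul_ne_zero (MvPolynomial.mem_support_iff.mp hap) (MvPolynomial.mem_support_iff.mp hbp)
  calc wdeg w1 w2 p + wdeg w1 w2 q = wt w1 w2 (a + b) := by rw [wt_add, hawt, hbwt]
  _ ≤ wdeg w1 w2 (p * q) := le_wdeg (MvPolynomial.mem_support_iff.mpr hcoeff)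

lemma wdeg_pow {w1 w2 : ℕ} (hw1 : 0 < w1) (hw2 : 0 < w2) {p : P2} (hp : p ≠ 0) (k : ℕ) :
    wdeg w1 w2 (p ^ k) = k * wdeg w1 w2 p := by
  induction k with
  | zero => simpa using wdeg_C w1 w2 1
  | succ n ih =>
      rw [pow_succ, wdeg_mul hw1 hw2 (pow_ne_zero n hp) hp, ih]
      ring
lemma wdeg_sum_le {w1 w2 d : ℕ} {s : Finset ℕ} {g : ℕ → P2}
    (h : ∀ i ∈ s, wdeg w1 w2 (g i) ≤ d) : wdeg w1 w2 (∑ i ∈ s, g i) ≤ d := by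
  classical
  induction s using Finset.induction_on with
  | empty => simp [wdeg_zero]
  | @insert a s' hni ih =>
      rw [Finset.sum_insert hni]
      refine le_trans (wdeg_add_le w1 w2 _ _) (max_le (h a (Finset.mem_insert_self a s')) ?_)
      exact ih fun i hi => h i (Finset.mem_insert_of_mem hi)

lemma wdeg_pow_le (w1 w2 : ℕ) (p : P2) (k : ℕ) :
    wdeg w1 w2 (p ^ k) ≤ k * wdeg w1 w2 p := by
  induction k with
  | zero => simpa using le_of_eq (wdeg_C w1 w2 1)
  | succ n ih =>
      rw [pow_succ]
      refine le_trans (wdeg_mul_le w1 w2 _ _) ?_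
      have : (n + 1) * wdeg w1 w2 p = n * wdeg w1 w2 p + wdeg w1 w2 p := by ring
      omega

lemma wdeg_smul_le (w1 w2 : ℕ) (c : ℂ) (p : P2) :
    wdeg w1 w2 (c • p) ≤ wdeg w1 w2 p := by
  rcases eq_or_ne c 0 with rfl | h
  · simp [wdeg_zero]
  · rw [MvPolynomial.smul_eq_C_mul]
    refine le_trans (wdeg_mul_le w1 w2 _ _) ?_
    rw [wdeg_C]; omega

lemma wdeg_aeval_le (w1 w2 : ℕ) (p : P2) (g : Polynomial ℂ) :
    wdeg w1 w2 (Polynomial.aeval p g) ≤ g.natDegree * wdeg w1 w2 p := by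
  classical
  rw [Polynomial.aeval_eq_sum_range]
  refine wdeg_sum_le ?_
  intro i hi
  have hi' : i ≤ g.natDegree := by
    have := Finset.mem_range.mp hi; omega
  refine le_trans (wdeg_smul_le w1 w2 _ _) (le_trans (wdeg_pow_le w1 w2 p i) ?_)
  exact Nat.mul_le_mul_right _ hi'

lemma wdeg_aeval {w1 w2 : ℕ} (hw1 : 0 < w1) (hw2 : 0 < w2) {p : P2} (hp : p ≠ 0)
    (hpd : 0 < wdeg w1 w2 p) {g : Polynomial ℂ} (hg : 0 < g.natDegree) :
    wdeg w1 w2 (Polynomial.aeval p g) = g.natDegree * wdeg w1 w2 p := by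
  classical
  have hg0 : g ≠ 0 := by intro h; rw [h] at hg; simp at hg
  have hlc : g.leadingCoeff ≠ 0 := Polynomial.leadingCoeff_ne_zero.mpr hg0
  have hdecomp := Polynomial.eraseLead_add_C_mul_X_pow g
  have heval : Polynomial.aeval p g =
      MvPolynomial.C g.leadingCoeff * p ^ g.natDegree + Polynomial.aeval p g.eraseLead := by
    conv_lhs => rw [← hdecomp]
    rw [map_add, map_mul, map_pow, Polynomial.aeval_C, Polynomial.aeval_X,
      MvPolynomial.algebraMap_eq]
    ring
  rw [heval]
  have hmain : wdeg w1 w2 (MvPolynomial.C g.leadingCoeff * p ^ g.natDegree) =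
      g.natDegree * wdeg w1 w2 p := by
    rw [wdeg_mul hw1 hw2 (by simpa using hlc) (pow_ne_zero _ hp), wdeg_C,
      wdeg_pow hw1 hw2 hp, zero_add]
  have herase : wdeg w1 w2 (Polynomial.aeval p g.eraseLead) < g.natDegree * wdeg w1 w2 p := by
    refine lt_of_le_of_lt (wdeg_aeval_le w1 w2 p g.eraseLead) ?_
    rcases Polynomial.eraseLead_natDegree_lt_or_eraseLead_eq_zero g with h | h
    · calc g.eraseLead.natDegree * wdeg w1 w2 p
          < g.natDegree * wdeg w1 w2 p := by
            exact Nat.mul_lt_mul_of_lt_of_le h (le_refl _) hpd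
      _ = _ := rfl
    · rw [h]; simpa using Nat.mul_pos hg hpd
  rw [wdeg_add_left (by rw [hmain]; exact herase), hmain]
noncomputable def s0 : Fin 2 →₀ ℕ := Finsupp.single 0 1
noncomputable def s1 : Fin 2 →₀ ℕ := Finsupp.single 1 1

lemma s0_apply0 : s0 0 = 1 := by simp [s0]
lemma s0_apply1 : s0 1 = 0 := by simp [s0]
lemma s1_apply0 : s1 0 = 0 := by simp [s1]
lemma s1_apply1 : s1 1 = 1 := by simp [s1]

lemma wt_s0 (w1 w2 : ℕ) : wt w1 w2 s0 = w1 := by simp [wt, s0_apply0, s0_apply1]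
lemma wt_s1 (w1 w2 : ℕ) : wt w1 w2 s1 = w2 := by simp [wt, s1_apply0, s1_apply1]
lemma wt_zero (w1 w2 : ℕ) : wt w1 w2 0 = 0 := by simp [wt]

lemma monomial_sum_eq (α : Fin 2 →₀ ℕ) : (α.sum fun _ e => e) = α 0 + α 1 := by
  rw [Finsupp.sum_fintype _ _ (fun _ => rfl), Fin.sum_univ_two]

lemma fin2_monomial_cases {α : Fin 2 →₀ ℕ} (h : α 0 + α 1 ≤ 1) :
    α = 0 ∨ α = s0 ∨ α = s1 := by
  rcases Nat.lt_or_ge (α 0) 1 with h0 | h0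
  · rcases Nat.lt_or_ge (α 1) 1 with h1 | h1
    · exact Or.inl (fin2_finsupp_ext (by show α 0 = 0; omega) (by show α 1 = 0; omega))
    · exact Or.inr (Or.inr (fin2_finsupp_ext (by rw [s1_apply0]; omega)
        (by rw [s1_apply1]; omega)))
  · exact Or.inr (Or.inl (fin2_finsupp_ext (by rw [s0_apply0]; omega)
      (by rw [s0_apply1]; omega)))

lemma affine_support {p : P2} (hp : p.totalDegree ≤ 1) {α : Fin 2 →₀ ℕ}
    (hα : α ∈ p.support) : α = 0 ∨ α = s0 ∨ α = s1 := by
  refine fin2_monomial_cases ?_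
  have h2 : (α.sum fun _ e => e) ≤ p.totalDegree := MvPolynomial.le_totalDegree hα
  rw [monomial_sum_eq] at h2
  exact le_trans h2 hp

lemma affine_linear_coeff {p : P2} (hp : p.totalDegree = 1) :
    MvPolynomial.coeff s0 p ≠ 0 ∨ MvPolynomial.coeff s1 p ≠ 0 := by
  have hp0 : p ≠ 0 := by intro h; rw [h] at hp; simp at hp
  obtain ⟨α, hα, hs⟩ := Finset.exists_mem_eq_sup p.support
    (MvPolynomial.support_nonempty.mpr hp0) (fun s : Fin 2 →₀ ℕ => s.sum fun _ e => e)
  have h1 : α 0 + α 1 = 1 := by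
    rw [← monomial_sum_eq]
    rw [MvPolynomial.totalDegree] at hp
    omega
  rcases fin2_monomial_cases (le_of_eq h1) with rfl | rfl | rfl
  · simp at h1
  · exact Or.inl (MvPolynomial.mem_support_iff.mp hα)
  · exact Or.inr (MvPolynomial.mem_support_iff.mp hα)

lemma affine_wdeg_le {w1 w2 : ℕ} {p : P2} (hp : p.totalDegree ≤ 1) :
    wdeg w1 w2 p ≤ max w1 w2 := by
  rw [wdeg_le_iff]
  intro α hα
  rcases affine_support hp hα with rfl | rfl | rfl
  · simp [wt_zero]
  · rw [wt_s0]; omega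
  · rw [wt_s1]; omega

lemma coeff_s0_wdeg {w1 w2 : ℕ} {p : P2} (h : MvPolynomial.coeff s0 p ≠ 0) :
    w1 ≤ wdeg w1 w2 p := by
  have := le_wdeg (w1 := w1) (w2 := w2) (MvPolynomial.mem_support_iff.mpr h)
  rwa [wt_s0] at this

lemma coeff_s1_wdeg {w1 w2 : ℕ} {p : P2} (h : MvPolynomial.coeff s1 p ≠ 0) :
    w2 ≤ wdeg w1 w2 p := by
  have := le_wdeg (w1 := w1) (w2 := w2) (MvPolynomial.mem_support_iff.mpr h)
  rwa [wt_s1] at this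

lemma affine_wdeg_pos {w1 w2 : ℕ} (hw1 : 0 < w1) (hw2 : 0 < w2) {p : P2}
    (hp : p.totalDegree = 1) : 0 < wdeg w1 w2 p := by
  rcases affine_linear_coeff hp with h | h
  · have := coeff_s0_wdeg (w1 := w1) (w2 := w2) h; omega
  · have := coeff_s1_wdeg (w1 := w1) (w2 := w2) h; omega

lemma affine_wdeg_dvd {w1 w2 : ℕ} {p : P2} (hp : p.totalDegree = 1) :
    w1 ∣ wdeg w1 w2 p ∨ w2 ∣ wdeg w1 w2 p := by
  classical
  have hle : wdeg w1 w2 p ≤ (if MvPolynomial.coeff s0 p ≠ 0 then w1 else 0) ⊔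
      (if MvPolynomial.coeff s1 p ≠ 0 then w2 else 0) := by
    rw [wdeg_le_iff]
    intro α hα
    rcases affine_support (le_of_eq hp) hα with rfl | rfl | rfl
    · simp [wt_zero]
    · rw [wt_s0]
      have : MvPolynomial.coeff s0 p ≠ 0 := MvPolynomial.mem_support_iff.mp hα
      simp [this]
    · rw [wt_s1]
      have : MvPolynomial.coeff s1 p ≠ 0 := MvPolynomial.mem_support_iff.mp hα
      simp [this]
  by_cases h0 : MvPolynomial.coeff s0 p ≠ 0 <;> by_cases h1 : MvPolynomial.coeff s1 p ≠ 0
  · rcases max_cases w1 w2 with ⟨hm, _⟩ | ⟨hm, _⟩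
    · left
      have h0' := coeff_s0_wdeg (w1 := w1) (w2 := w2) h0
      have h1' := coeff_s1_wdeg (w1 := w1) (w2 := w2) h1
      simp [h0, h1] at hle
      have : wdeg w1 w2 p = w1 := by omega
      rw [this]
    · right
      have h0' := coeff_s0_wdeg (w1 := w1) (w2 := w2) h0
      have h1' := coeff_s1_wdeg (w1 := w1) (w2 := w2) h1
      simp [h0, h1] at hle
      have : wdeg w1 w2 p = w2 := by omega
      rw [this]
  · left
    have h0' := coeff_s0_wdeg (w1 := w1) (w2 := w2) h0
    simp [h0, h1] at hle
    have : wdeg w1 w2 p = w1 := by omega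
    rw [this]
  · right
    have h1' := coeff_s1_wdeg (w1 := w1) (w2 := w2) h1
    simp [h0, h1] at hle
    have : wdeg w1 w2 p = w2 := by omega
    rw [this]
  · rcases affine_linear_coeff hp with h | h
    · exact absurd h h0
    · exact absurd h h1
lemma s0_ne_zero : s0 ≠ 0 := by
  intro h; have := congrArg (fun f : Fin 2 →₀ ℕ => f 0) h; simp [s0_apply0] at this
lemma s1_ne_zero : s1 ≠ 0 := by
  intro h; have := congrArg (fun f : Fin 2 →₀ ℕ => f 1) h; simp [s1_apply1] at this
lemma s0_ne_s1 : s0 ≠ s1 := by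
  intro h; have := congrArg (fun f : Fin 2 →₀ ℕ => f 0) h; simp [s0_apply0, s1_apply0] at this

lemma aeval_mem {S : Subalgebra ℂ P2} {g : Fin 2 → P2} (h0 : g 0 ∈ S) (h1 : g 1 ∈ S)
    (p : P2) : MvPolynomial.aeval g p ∈ S := by
  induction p using MvPolynomial.induction_on with
  | C c => rw [MvPolynomial.aeval_C]; exact S.algebraMap_mem c
  | add p q hp hq => rw [map_add]; exact S.add_mem hp hq
  | mul_X p n hp =>
      rw [map_mul, MvPolynomial.aeval_X]
      refine S.mul_mem hp ?_
      fin_cases n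
      · exact h0
      · exact h1

lemma supported0_of_coeff_s1 {p : P2} (hp : p.totalDegree ≤ 1)
    (h : MvPolynomial.coeff s1 p = 0) : p ∈ MvPolynomial.supported ℂ ({0} : Set (Fin 2)) := by
  rw [MvPolynomial.mem_supported]
  intro i hi
  rw [Finset.mem_coe, MvPolynomial.mem_vars] at hi
  obtain ⟨α, hα, hiα⟩ := hi
  rcases affine_support hp hα with rfl | rfl | rfl
  · simp at hiα
  · have h' : s0 i ≠ 0 := Finsupp.mem_support_iff.mp hiα
    fin_cases i
    · simp
    · exact absurd s0_apply1 h'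
  · exact absurd (MvPolynomial.mem_support_iff.mp hα) (by simpa using h)

lemma supported1_of_coeff_s0 {p : P2} (hp : p.totalDegree ≤ 1)
    (h : MvPolynomial.coeff s0 p = 0) : p ∈ MvPolynomial.supported ℂ ({1} : Set (Fin 2)) := by
  rw [MvPolynomial.mem_supported]
  intro i hi
  rw [Finset.mem_coe, MvPolynomial.mem_vars] at hi
  obtain ⟨α, hα, hiα⟩ := hi
  rcases affine_support hp hα with rfl | rfl | rfl
  · simp at hiα
  · exact absurd (MvPolynomial.mem_support_iff.mp hα) (by simpa using h)
  · have h' : s1 i ≠ 0 := Finsupp.mem_support_iff.mp hiα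
    fin_cases i
    · exact absurd s1_apply0 h'
    · simp

lemma coeff_s0_of_supported1 {q : P2} (h : q ∈ MvPolynomial.supported ℂ ({1} : Set (Fin 2))) :
    MvPolynomial.coeff s0 q = 0 := by
  by_contra hc
  have h0 : (0 : Fin 2) ∈ q.vars := by
    rw [MvPolynomial.mem_vars]
    exact ⟨s0, MvPolynomial.mem_support_iff.mpr hc, by
      rw [Finsupp.mem_support_iff, s0_apply0]; exact one_ne_zero⟩
  have := (MvPolynomial.mem_supported.mp h) (Finset.mem_coe.mpr h0)
  simp at this
lemma coeff_s1_of_supported0 {q : P2} (h : q ∈ MvPolynomial.supported ℂ ({0} : Set (Fin 2))) :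
    MvPolynomial.coeff s1 q = 0 := by
  by_contra hc
  have h0 : (1 : Fin 2) ∈ q.vars := by
    rw [MvPolynomial.mem_vars]
    exact ⟨s1, MvPolynomial.mem_support_iff.mpr hc, by
      rw [Finsupp.mem_support_iff, s1_apply1]; exact one_ne_zero⟩
  have := (MvPolynomial.mem_supported.mp h) (Finset.mem_coe.mpr h0)
  simp at this

lemma affine_eq {p : P2} (hp : p.totalDegree ≤ 1) :
    p = MvPolynomial.C (MvPolynomial.coeff s0 p) * MvPolynomial.X 0 +
        MvPolynomial.C (MvPolynomial.coeff s1 p) * MvPolynomial.X 1 +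
        MvPolynomial.C (MvPolynomial.coeff 0 p) := by
  classical
  apply MvPolynomial.ext
  intro α
  rw [MvPolynomial.coeff_add, MvPolynomial.coeff_add, MvPolynomial.coeff_C_mul,
    MvPolynomial.coeff_C_mul, MvPolynomial.coeff_X', MvPolynomial.coeff_X',
    MvPolynomial.coeff_C]
  have hs0 : Finsupp.single (0 : Fin 2) 1 = s0 := rfl
  have hs1 : Finsupp.single (1 : Fin 2) 1 = s1 := rfl
  rw [hs0, hs1]
  by_cases h0 : α = 0
  · subst h0
    rw [if_neg (Ne.symm s0_ne_zero ∘ Eq.symm), if_neg (Ne.symm s1_ne_zero ∘ Eq.symm), if_pos rfl]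
    ring
  · by_cases hα0 : α = s0
    · subst hα0
      rw [if_pos rfl, if_neg (fun h => s0_ne_s1 h.symm), if_neg (fun h => s0_ne_zero h.symm)]
      ring
    · by_cases hα1 : α = s1
      · subst hα1
        rw [if_neg (fun h => s0_ne_s1 h), if_pos rfl, if_neg (fun h => s1_ne_zero h.symm)]
        ring
      · have hns : α ∉ p.support := by
          intro hmem
          rcases affine_support hp hmem with h | h | h
          · exact h0 h
          · exact hα0 h
          · exact hα1 h
        rw [MvPolynomial.notMem_support_iff.mp hns,
          if_neg (fun h => hα0 h.symm), if_neg (fun h => hα1 h.symm), if_neg (fun h => h0 h.symm)]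
        ring
lemma C_ne_zero' {a : ℂ} (ha : a ≠ 0) : (MvPolynomial.C a : P2) ≠ 0 := by simpa using ha

lemma wdeg_C_mul {w1 w2 : ℕ} (hw1 : 0 < w1) (hw2 : 0 < w2) {a : ℂ} (ha : a ≠ 0)
    {P : P2} (hP : P ≠ 0) : wdeg w1 w2 (MvPolynomial.C a * P) = wdeg w1 w2 P := by
  rw [wdeg_mul hw1 hw2 (C_ne_zero' ha) hP, wdeg_C, zero_add]

lemma wdeg_combo {w1 w2 : ℕ} (hw1 : 0 < w1) (hw2 : 0 < w2) {P Q : P2} {a b c : ℂ}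
    (hPQ : wdeg w1 w2 Q < wdeg w1 w2 P) (hQpos : 0 < wdeg w1 w2 Q) (hab : a ≠ 0 ∨ b ≠ 0) :
    wdeg w1 w2 (MvPolynomial.C a * P + MvPolynomial.C b * Q + MvPolynomial.C c) = wdeg w1 w2 P ∨
    wdeg w1 w2 (MvPolynomial.C a * P + MvPolynomial.C b * Q + MvPolynomial.C c) = wdeg w1 w2 Q := by
  have hQ0 : Q ≠ 0 := by intro h; rw [h, wdeg_zero] at hQpos; omega
  have hP0 : P ≠ 0 := by
    intro h; rw [h, wdeg_zero] at hPQ; omega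
  by_cases ha : a = 0
  · right
    have hb : b ≠ 0 := by tauto
    subst ha
    rw [map_zero, zero_mul, zero_add]
    rw [wdeg_add_left (by rw [wdeg_C, wdeg_C_mul hw1 hw2 hb hQ0]; omega),
      wdeg_C_mul hw1 hw2 hb hQ0]
  · left
    rw [add_assoc]
    have hrest : wdeg w1 w2 (MvPolynomial.C b * Q + MvPolynomial.C c) < wdeg w1 w2 P := by
      refine lt_of_le_of_lt (wdeg_add_le w1 w2 _ _) ?_
      have h1 : wdeg w1 w2 (MvPolynomial.C b * Q) ≤ wdeg w1 w2 Q := by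
        refine le_trans (wdeg_mul_le w1 w2 _ _) ?_
        rw [wdeg_C]; omega
      have h2 : wdeg w1 w2 (MvPolynomial.C c : P2) = 0 := wdeg_C w1 w2 c
      omega
    rw [wdeg_add_left (by rw [wdeg_C_mul hw1 hw2 ha hP0]; exact hrest),
      wdeg_C_mul hw1 hw2 ha hP0]

lemma aeval_affine {P Q : P2} {p : P2} (hp : p.totalDegree ≤ 1) :
    MvPolynomial.aeval ![P, Q] p =
      MvPolynomial.C (MvPolynomial.coeff s0 p) * P +
      MvPolynomial.C (MvPolynomial.coeff s1 p) * Q +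
      MvPolynomial.C (MvPolynomial.coeff 0 p) := by
  conv_lhs => rw [affine_eq hp]
  rw [map_add, map_add, map_mul, map_mul, MvPolynomial.aeval_X, MvPolynomial.aeval_X,
    MvPolynomial.aeval_C, MvPolynomial.aeval_C, MvPolynomial.aeval_C, MvPolynomial.algebraMap_eq]
  simp

lemma pcomp_lowerT (g : Polynomial ℂ) (G : PolyMap) :
    pcomp (lowerT g) G = (G.1, G.2 + Polynomial.aeval G.1 g) := by
  unfold pcomp lowerT
  refine Prod.ext ?_ ?_
  · simp
  · show MvPolynomial.aeval ![G.1, G.2] (MvPolynomial.X 1 + Polynomial.aeval (MvPolynomial.X 0) g)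
      = G.2 + Polynomial.aeval G.1 g
    rw [map_add, MvPolynomial.aeval_X, ← Polynomial.aeval_algHom_apply, MvPolynomial.aeval_X]
    simp

lemma pcomp_upperT (g : Polynomial ℂ) (G : PolyMap) :
    pcomp (upperT g) G = (G.1 + Polynomial.aeval G.2 g, G.2) := by
  unfold pcomp upperT
  refine Prod.ext ?_ ?_
  · show MvPolynomial.aeval ![G.1, G.2] (MvPolynomial.X 0 + Polynomial.aeval (MvPolynomial.X 1) g)
      = G.1 + Polynomial.aeval G.2 g
    rw [map_add, MvPolynomial.aeval_X, ← Polynomial.aeval_algHom_apply, MvPolynomial.aeval_X]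
    simp
  · simp

/-- the component most recently modified (for `i ≥ 1`), resp. the first component of `L1` at `i = 0`. -/
noncomputable def Big (L1 : PolyMap) (f : ℕ → Polynomial ℂ) (i : ℕ) : P2 :=
  if i % 2 = 1 then (chain L1 f i).2 else (chain L1 f i).1

noncomputable def Oth (L1 : PolyMap) (f : ℕ → Polynomial ℂ) (i : ℕ) : P2 :=
  if i % 2 = 1 then (chain L1 f i).1 else (chain L1 f i).2

lemma chain_step (L1 : PolyMap) (f : ℕ → Polynomial ℂ) (i : ℕ) :
    Big L1 f (i + 1) = Oth L1 f i + Polynomial.aeval (Big L1 f i) (f (i + 1)) ∧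
    Oth L1 f (i + 1) = Big L1 f i := by
  rcases Nat.mod_two_eq_zero_or_one i with h | h
  · have hch : chain L1 f (i + 1) = pcomp (lowerT (f (i + 1))) (chain L1 f i) := by
      rw [chain, if_pos h]
    have h1 : (i + 1) % 2 = 1 := by omega
    unfold Big Oth
    rw [hch, pcomp_lowerT, h1, h]
    norm_num
  · have hch : chain L1 f (i + 1) = pcomp (upperT (f (i + 1))) (chain L1 f i) := by
      rw [chain, if_neg (by omega)]
    have h1 : (i + 1) % 2 = 0 := by omega
    unfold Big Oth
    rw [hch, pcomp_upperT, h1, h]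
    norm_num
lemma paeval_mem_subalg {S : Subalgebra ℂ P2} {u : P2} (hu : u ∈ S) (g : Polynomial ℂ) :
    Polynomial.aeval u g ∈ S :=
  Algebra.adjoin_le (Set.singleton_subset_iff.mpr hu) (Polynomial.aeval_mem_adjoin_singleton ℂ u)

lemma inv_step {w1 w2 : ℕ} (hw1 : 0 < w1) (hw2 : 0 < w2) {B O : P2} {g : Polynomial ℂ}
    (hB : B ≠ 0) (hlt : wdeg w1 w2 O < wdeg w1 w2 B) (hg : 1 < g.natDegree) :
    wdeg w1 w2 (O + Polynomial.aeval B g) = g.natDegree * wdeg w1 w2 B ∧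
    O + Polynomial.aeval B g ≠ 0 ∧
    wdeg w1 w2 B < wdeg w1 w2 (O + Polynomial.aeval B g) := by
  have hBpos : 0 < wdeg w1 w2 B := lt_of_le_of_lt (Nat.zero_le _) hlt
  have haev : wdeg w1 w2 (Polynomial.aeval B g) = g.natDegree * wdeg w1 w2 B :=
    wdeg_aeval hw1 hw2 hB hBpos (by omega)
  have h2B : 2 * wdeg w1 w2 B ≤ g.natDegree * wdeg w1 w2 B :=
    Nat.mul_le_mul_right _ (by omega)
  have hkey : wdeg w1 w2 (O + Polynomial.aeval B g) = g.natDegree * wdeg w1 w2 B := by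
    rw [add_comm, wdeg_add_left (by omega)]
    exact haev
  refine ⟨hkey, ?_, by omega⟩
  intro h
  rw [h, wdeg_zero] at hkey
  omega

lemma inv_base {w1 w2 : ℕ} (hw1 : 0 < w1) (hw2 : 0 < w2) {u v : P2}
    (hu : u.totalDegree = 1) (hv : v.totalDegree = 1)
    (hx : MvPolynomial.coeff s0 u ≠ 0 ∨ MvPolynomial.coeff s0 v ≠ 0)
    (hy : MvPolynomial.coeff s1 u ≠ 0 ∨ MvPolynomial.coeff s1 v ≠ 0)
    {g : Polynomial ℂ} (hg : 1 < g.natDegree) :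
    v + Polynomial.aeval u g ≠ 0 ∧ u ≠ 0 ∧
    wdeg w1 w2 u < wdeg w1 w2 (v + Polynomial.aeval u g) ∧
    max w1 w2 ≤ wdeg w1 w2 (v + Polynomial.aeval u g) ∧
    (w1 ∣ wdeg w1 w2 (v + Polynomial.aeval u g) ∨ w2 ∣ wdeg w1 w2 (v + Polynomial.aeval u g)) := by
  have hu0 : u ≠ 0 := by intro h; rw [h] at hu; simp at hu
  have hv0 : v ≠ 0 := by intro h; rw [h] at hv; simp at hv
  set δ1 := wdeg w1 w2 u with hδ1def
  set δ2 := wdeg w1 w2 v with hδ2def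
  set n := g.natDegree with hndef
  have hδ1 : 0 < δ1 := affine_wdeg_pos hw1 hw2 hu
  have hδ2 : 0 < δ2 := affine_wdeg_pos hw1 hw2 hv
  have hδ1le : δ1 ≤ max w1 w2 := affine_wdeg_le (le_of_eq hu)
  have hδ2le : δ2 ≤ max w1 w2 := affine_wdeg_le (le_of_eq hv)
  have hmaxδ : max w1 w2 ≤ max δ1 δ2 := by
    have h1 : w1 ≤ max δ1 δ2 := by
      rcases hx with h | h
      · exact le_trans (coeff_s0_wdeg h) (le_max_left _ _)
      · exact le_trans (coeff_s0_wdeg h) (le_max_right _ _)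
    have h2 : w2 ≤ max δ1 δ2 := by
      rcases hy with h | h
      · exact le_trans (coeff_s1_wdeg h) (le_max_left _ _)
      · exact le_trans (coeff_s1_wdeg h) (le_max_right _ _)
    omega
  have haev : wdeg w1 w2 (Polynomial.aeval u g) = n * δ1 :=
    wdeg_aeval hw1 hw2 hu0 hδ1 (by omega)
  have h2δ1 : 2 * δ1 ≤ n * δ1 := Nat.mul_le_mul_right _ (by omega)
  set B := v + Polynomial.aeval u g with hBdef
  rcases lt_trichotomy δ2 (n * δ1) with hcmp | hcmp | hcmp
  · -- δ2 ≤ n δ1 (strict): no cancellation automatic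
    have hwB : wdeg w1 w2 B = n * δ1 := by
      rw [hBdef, add_comm, wdeg_add_left (by omega)]
      exact haev
    have hdvd : w1 ∣ n * δ1 ∨ w2 ∣ n * δ1 := by
      rcases affine_wdeg_dvd (w1 := w1) (w2 := w2) hu with h | h
      · exact Or.inl (Dvd.dvd.mul_left h n)
      · exact Or.inr (Dvd.dvd.mul_left h n)
    refine ⟨?_, hu0, by omega, by omega, by rw [hwB]; exact hdvd⟩
    intro h
    rw [h, wdeg_zero] at hwB
    omega
  · -- equality: no-cancellation via variable separation
    have hwB : wdeg w1 w2 B = n * δ1 := by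
      refine le_antisymm ?_ ?_
      · refine le_trans (wdeg_add_le w1 w2 _ _) ?_
        rw [haev]
        omega
      · -- find a surviving monomial of v
        obtain ⟨α, hα, hwt⟩ := exists_wt_eq (w1 := w1) (w2 := w2) hv0
        have hαne : α ≠ 0 := by
          intro h; rw [h, wt_zero] at hwt; omega
        have hcoeffaev : MvPolynomial.coeff α (Polynomial.aeval u g) = 0 := by
          rcases affine_support (le_of_eq hv) hα with h | h | h
          · exact absurd h hαne
          · -- α = s0 : δ2 = w1
            subst h
            rw [wt_s0] at hwt
            have hδ1lt : δ1 < w1 := by omega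
            have hcu : MvPolynomial.coeff s0 u = 0 := by
              by_contra hc
              have := coeff_s0_wdeg (w1 := w1) (w2 := w2) hc
              omega
            exact coeff_s0_of_supported1
              (paeval_mem_subalg (supported1_of_coeff_s0 (le_of_eq hu) hcu) g)
          · -- α = s1 : δ2 = w2
            subst h
            rw [wt_s1] at hwt
            have hδ1lt : δ1 < w2 := by omega
            have hcu : MvPolynomial.coeff s1 u = 0 := by
              by_contra hc
              have := coeff_s1_wdeg (w1 := w1) (w2 := w2) hc
              omega
            exact coeff_s1_of_supported0
              (paeval_mem_subalg (supported0_of_coeff_s1 (le_of_eq hu) hcu) g)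
        have hmem : α ∈ B.support := by
          rw [hBdef, MvPolynomial.mem_support_iff, MvPolynomial.coeff_add, hcoeffaev, add_zero]
          exact MvPolynomial.mem_support_iff.mp hα
        calc n * δ1 = wt w1 w2 α := by omega
        _ ≤ wdeg w1 w2 B := le_wdeg hmem
    have hdvd : w1 ∣ n * δ1 ∨ w2 ∣ n * δ1 := by
      rcases affine_wdeg_dvd (w1 := w1) (w2 := w2) hu with h | h
      · exact Or.inl (Dvd.dvd.mul_left h n)
      · exact Or.inr (Dvd.dvd.mul_left h n)
    refine ⟨?_, hu0, by omega, by omega, by rw [hwB]; exact hdvd⟩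
    intro h
    rw [h, wdeg_zero] at hwB
    omega
  · -- δ2 > n δ1
    have hwB : wdeg w1 w2 B = δ2 := by
      rw [hBdef, wdeg_add_left (by omega)]
    have hdvd : w1 ∣ δ2 ∨ w2 ∣ δ2 := affine_wdeg_dvd (w1 := w1) (w2 := w2) hv
    refine ⟨?_, hu0, by omega, by omega, by rw [hwB]; exact hdvd⟩
    intro h
    rw [h, wdeg_zero] at hwB
    omega
def ChInv (w1 w2 : ℕ) (L1 : PolyMap) (f : ℕ → Polynomial ℂ) (i : ℕ) : Prop :=
  Big L1 f i ≠ 0 ∧ Oth L1 f i ≠ 0 ∧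
  wdeg w1 w2 (Oth L1 f i) < wdeg w1 w2 (Big L1 f i) ∧
  max w1 w2 ≤ wdeg w1 w2 (Big L1 f i) ∧
  (w1 ∣ wdeg w1 w2 (Big L1 f i) ∨ w2 ∣ wdeg w1 w2 (Big L1 f i))

lemma affine_aut_coeffs {L1 : PolyMap} (hL1 : IsAffineAut L1) :
    (MvPolynomial.coeff s0 L1.1 ≠ 0 ∨ MvPolynomial.coeff s0 L1.2 ≠ 0) ∧
    (MvPolynomial.coeff s1 L1.1 ≠ 0 ∨ MvPolynomial.coeff s1 L1.2 ≠ 0) := by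
  obtain ⟨⟨G, _, hG2⟩, ht1, ht2⟩ := hL1
  constructor
  · by_contra hc
    push_neg at hc
    obtain ⟨h1, h2⟩ := hc
    have hs1 : L1.1 ∈ MvPolynomial.supported ℂ ({1} : Set (Fin 2)) :=
      supported1_of_coeff_s0 (le_of_eq ht1) h1
    have hs2 : L1.2 ∈ MvPolynomial.supported ℂ ({1} : Set (Fin 2)) :=
      supported1_of_coeff_s0 (le_of_eq ht2) h2
    have hX : (MvPolynomial.X 0 : P2) = MvPolynomial.aeval ![L1.1, L1.2] G.1 := by
      have := congrArg Prod.fst hG2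
      exact this.symm
    have hmem : (MvPolynomial.X 0 : P2) ∈ MvPolynomial.supported ℂ ({1} : Set (Fin 2)) := by
      rw [hX]
      exact aeval_mem (by simpa using hs1) (by simpa using hs2) G.1
    have := MvPolynomial.mem_supported.mp hmem
    rw [MvPolynomial.vars_X] at this
    have h0 : (0 : Fin 2) ∈ ({1} : Set (Fin 2)) := this (by simp)
    simp at h0
  · by_contra hc
    push_neg at hc
    obtain ⟨h1, h2⟩ := hc
    have hs1 : L1.1 ∈ MvPolynomial.supported ℂ ({0} : Set (Fin 2)) :=
      supported0_of_coeff_s1 (le_of_eq ht1) h1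
    have hs2 : L1.2 ∈ MvPolynomial.supported ℂ ({0} : Set (Fin 2)) :=
      supported0_of_coeff_s1 (le_of_eq ht2) h2
    have hX : (MvPolynomial.X 1 : P2) = MvPolynomial.aeval ![L1.1, L1.2] G.2 := by
      have := congrArg Prod.snd hG2
      exact this.symm
    have hmem : (MvPolynomial.X 1 : P2) ∈ MvPolynomial.supported ℂ ({0} : Set (Fin 2)) := by
      rw [hX]
      exact aeval_mem (by simpa using hs1) (by simpa using hs2) G.2
    have := MvPolynomial.mem_supported.mp hmem
    rw [MvPolynomial.vars_X] at this
    have h0 : (1 : Fin 2) ∈ ({0} : Set (Fin 2)) := this (by simp)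
    simp at h0

lemma chain_inv {w1 w2 : ℕ} (hw1 : 0 < w1) (hw2 : 0 < w2) {L1 : PolyMap}
    (hL1 : IsAffineAut L1) {f : ℕ → Polynomial ℂ} {l : ℕ}
    (hf : ∀ i, 1 ≤ i → i ≤ l → 1 < (f i).natDegree) :
    ∀ i, 1 ≤ i → i ≤ l → ChInv w1 w2 L1 f i := by
  intro i hi1
  induction i, hi1 using Nat.le_induction with
  | base =>
      intro hil
      obtain ⟨hB1, hO1⟩ := chain_step L1 f 0
      have hBig0 : Big L1 f 0 = L1.1 := by unfold Big; norm_num; rfl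
      have hOth0 : Oth L1 f 0 = L1.2 := by unfold Oth; norm_num; rfl
      rw [hBig0, hOth0] at hB1
      rw [hBig0] at hO1
      obtain ⟨hx, hy⟩ := affine_aut_coeffs hL1
      have hbase := inv_base hw1 hw2 hL1.2.1 hL1.2.2 hx hy (hf 1 (le_refl 1) hil)
      refine ⟨by rw [hB1]; exact hbase.1, by rw [hO1]; exact hbase.2.1, ?_, ?_, ?_⟩
      · rw [hB1, hO1]; exact hbase.2.2.1
      · rw [hB1]; exact hbase.2.2.2.1
      · rw [hB1]; exact hbase.2.2.2.2
  | succ n hn ih =>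
      intro hil
      obtain ⟨hBig, hOth, hlt, hmax, hdvd⟩ := ih (by omega)
      obtain ⟨hBs, hOs⟩ := chain_step L1 f n
      have hstep := inv_step hw1 hw2 (g := f (n + 1)) hBig hlt (hf (n + 1) (by omega) hil)
      refine ⟨by rw [hBs]; exact hstep.2.1, by rw [hOs]; exact hBig, ?_, ?_, ?_⟩
      · rw [hBs, hOs]; exact hstep.2.2
      · rw [hBs]; omega
      · rw [hBs, hstep.1]
        rcases hdvd with h | h
        · exact Or.inl (Dvd.dvd.mul_left h _)
        · exact Or.inr (Dvd.dvd.mul_left h _)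
set_option maxHeartbeats 2000000 in
lemma wdeg_combo_sym {w1 w2 : ℕ} (hw1 : 0 < w1) (hw2 : 0 < w2) {P Q : P2} {a b c : ℂ}
    (hne : wdeg w1 w2 P ≠ wdeg w1 w2 Q) (hPpos : 0 < wdeg w1 w2 P) (hQpos : 0 < wdeg w1 w2 Q)
    (hab : a ≠ 0 ∨ b ≠ 0) :
    wdeg w1 w2 (MvPolynomial.C a * P + MvPolynomial.C b * Q + MvPolynomial.C c) = wdeg w1 w2 P ∨
    wdeg w1 w2 (MvPolynomial.C a * P + MvPolynomial.C b * Q + MvPolynomial.C c) =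
      wdeg w1 w2 Q := by
  rcases lt_or_gt_of_ne hne with h | h
  · rw [add_comm (MvPolynomial.C a * P) (MvPolynomial.C b * Q)]
    rcases wdeg_combo hw1 hw2 h hPpos (Or.symm (by tauto)) with h' | h'
    · exact Or.inr h'
    · exact Or.inl h'
  · exact wdeg_combo hw1 hw2 h hQpos hab

theorem stmt_7' (w1 w2 : ℕ) (hw1 : 0 < w1) (hw2 : 0 < w2) (F : PolyMap)
    (l : ℕ) (hl : 2 ≤ l) (L1 L2 : PolyMap) (hL1 : IsAffineAut L1) (hL2 : IsAffineAut L2)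
    (f : ℕ → Polynomial ℂ) (hf : ∀ i, 1 ≤ i → i ≤ l → 1 < (f i).natDegree)
    (hF : F = pcomp L2 (chain L1 f l))
    (d1 d2 : ℕ) (hd1 : d1 = wdeg w1 w2 F.1) (hd2 : d2 = wdeg w1 w2 F.2) :
    (w1 ∣ d1 ∧ w1 ∣ d2 ∧ 0 < d1 ∧ 0 < d2 ∧ max w1 w2 ≤ min d1 d2 ∧ (d1 ∣ d2 ∨ d2 ∣ d1)) ∨
    (w2 ∣ d1 ∧ w2 ∣ d2 ∧ 0 < d1 ∧ 0 < d2 ∧ max w1 w2 ≤ min d1 d2 ∧ (d1 ∣ d2 ∨ d2 ∣ d1)) := by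
  obtain ⟨hBig, hOth, hlt, hmax, hdvd⟩ :=
    chain_inv hw1 hw2 hL1 hf (l - 1) (by omega) (by omega)
  obtain ⟨hBs, hOs⟩ := chain_step L1 f (l - 1)
  rw [Nat.sub_add_cancel (by omega)] at hBs hOs
  have hstep := inv_step hw1 hw2 (g := f l) hBig hlt (hf l (by omega) (le_refl l))
  rw [← hBs] at hstep
  set E := wdeg w1 w2 (Big L1 f (l - 1)) with hEdef
  set M := wdeg w1 w2 (Big L1 f l) with hMdef
  have hME : M = (f l).natDegree * E := hstep.1
  have hOl : wdeg w1 w2 (Oth L1 f l) = E := by rw [hOs]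
  have hEM : E ∣ M := by rw [hME]; exact dvd_mul_left E _
  have hElt : E < M := hstep.2.2
  have hEpos : 0 < E := by omega
  have hBl0 : Big L1 f l ≠ 0 := hstep.2.1
  have hOl0 : Oth L1 f l ≠ 0 := by rw [hOs]; exact hBig
  -- components of chain l
  set P := (chain L1 f l).1 with hPdef
  set Q := (chain L1 f l).2 with hQdef
  have hPQ : (wdeg w1 w2 P = M ∧ wdeg w1 w2 Q = E) ∨
      (wdeg w1 w2 P = E ∧ wdeg w1 w2 Q = M) := by
    rcases Nat.mod_two_eq_zero_or_one l with h | h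
    · left
      constructor
      · rw [hMdef]; unfold Big; rw [if_neg (by omega)]
      · rw [← hOl]; unfold Oth; rw [if_neg (by omega)]
    · right
      constructor
      · rw [← hOl]; unfold Oth; rw [if_pos h]
      · rw [hMdef]; unfold Big; rw [if_pos h]
  have hPpos : 0 < wdeg w1 w2 P := by rcases hPQ with ⟨h1, _⟩ | ⟨h1, _⟩ <;> omega
  have hQpos : 0 < wdeg w1 w2 Q := by rcases hPQ with ⟨_, h1⟩ | ⟨_, h1⟩ <;> omega
  have hPQne : wdeg w1 w2 P ≠ wdeg w1 w2 Q := by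
    rcases hPQ with ⟨h1, h2⟩ | ⟨h1, h2⟩ <;> omega
  -- components of F
  have hF1 : F.1 = MvPolynomial.aeval ![P, Q] L2.1 := by rw [hF]; rfl
  have hF2 : F.2 = MvPolynomial.aeval ![P, Q] L2.2 := by rw [hF]; rfl
  have hd1' : d1 = wdeg w1 w2 P ∨ d1 = wdeg w1 w2 Q := by
    rw [hd1, hF1, aeval_affine (le_of_eq hL2.2.1)]
    exact wdeg_combo_sym hw1 hw2 hPQne hPpos hQpos (affine_linear_coeff hL2.2.1)
  have hd2' : d2 = wdeg w1 w2 P ∨ d2 = wdeg w1 w2 Q := by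
    rw [hd2, hF2, aeval_affine (le_of_eq hL2.2.2)]
    exact wdeg_combo_sym hw1 hw2 hPQne hPpos hQpos (affine_linear_coeff hL2.2.2)
  have hd1ME : d1 = M ∨ d1 = E := by
    rcases hPQ with ⟨h1, h2⟩ | ⟨h1, h2⟩ <;> rcases hd1' with h | h <;> omega
  have hd2ME : d2 = M ∨ d2 = E := by
    rcases hPQ with ⟨h1, h2⟩ | ⟨h1, h2⟩ <;> rcases hd2' with h | h <;> omega
  have hEd1 : E ∣ d1 := by
    rcases hd1ME with h | h
    · rw [h]; exact hEM
    · rw [h]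
  have hEd2 : E ∣ d2 := by
    rcases hd2ME with h | h
    · rw [h]; exact hEM
    · rw [h]
  have hdd : d1 ∣ d2 ∨ d2 ∣ d1 := by
    rcases hd1ME with h1 | h1 <;> rcases hd2ME with h2 | h2
    · left; rw [h1, h2]
    · right; rw [h1, h2]; exact hEM
    · left; rw [h1, h2]; exact hEM
    · left; rw [h1, h2]
  have hd1pos : 0 < d1 := by rcases hd1ME with h | h <;> omega
  have hd2pos : 0 < d2 := by rcases hd2ME with h | h <;> omega
  have hminmax : max w1 w2 ≤ min d1 d2 := by
    rcases hd1ME with h1 | h1 <;> rcases hd2ME with h2 | h2 <;> omega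
  rcases hdvd with hw | hw
  · exact Or.inl ⟨dvd_trans hw hEd1, dvd_trans hw hEd2, hd1pos, hd2pos, hminmax, hdd⟩
  · exact Or.inr ⟨dvd_trans hw hEd1, dvd_trans hw hEd2, hd1pos, hd2pos, hminmax, hdd⟩
end Aux

/-- Weighted bidegrees of automorphisms of length at least 2. -/
theorem stmt_7 (w1 w2 : ℕ) (hw1 : 0 < w1) (hw2 : 0 < w2) (F : PolyMap) (hAut : IsPolyAut F)
    (l : ℕ) (hl : 2 ≤ l) (L1 L2 : PolyMap) (hL1 : IsAffineAut L1) (hL2 : IsAffineAut L2)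
    (f : ℕ → Polynomial ℂ) (hf : ∀ i, 1 ≤ i → i ≤ l → 1 < (f i).natDegree)
    (hF : F = pcomp L2 (chain L1 f l))
    (d1 d2 : ℕ) (hd1 : d1 = wdeg w1 w2 F.1) (hd2 : d2 = wdeg w1 w2 F.2) :
    (w1 ∣ d1 ∧ w1 ∣ d2 ∧ 0 < d1 ∧ 0 < d2 ∧ max w1 w2 ≤ min d1 d2 ∧ (d1 ∣ d2 ∨ d2 ∣ d1)) ∨
    (w2 ∣ d1 ∧ w2 ∣ d2 ∧ 0 < d1 ∧ 0 < d2 ∧ max w1 w2 ≤ min d1 d2 ∧ (d1 ∣ d2 ∨ d2 ∣ d1)) := by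
  exact stmt_7' w1 w2 hw1 hw2 F l hl L1 L2 hL1 hL2 f hf hF d1 d2 hd1 hd2
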